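/- (Anyon–Fermi expansion of the reduced density matrix, ordering $O_+$.) Let $\kappa \in \mathbb{R}$, $L>0$, $V = [-L/2, L/2]$, $N \ge n \ge 1$, and let $\chi: \mathbb{R}^N \to \mathbb{C}$ be continuous and totally antisymmetric. Let $x_1 < x_1' < \cdots < x_n < x_n'$ be points of $V$ and set $I_+ = [x_1,x_1'] \cup \cdots \cup [x_n,x_n']$. Define $\chi^a = A_\kappa\, B\, \chi$ and the statistics constant $C_+ = A_{-\kappa}(x_1',\dots,x_n')\, B(x_1',\dots,x_n')\, A_\kappa(x_1,\dots,x_n)\, B(x_1,\dots,x_n)$. Then $\int_{V^{N-n}} \overline{\chi^a(z_1,\dots,z_{N-n}, x_1',\dots,x_n')}\, \chi^a(z_1,\dots,z_{N-n}, x_1,\dots,x_n)\, dz = C_+ \sum_{j=0}^{N-n} (-1)^j (1 + e^{i\pi\kappa})^j \binom{N-n}{j} \int_{I_+^{\,j}} dw \int_{V^{N-n-j}} dz\, \overline{\chi(w_1,\dots,w_j, z_1,\dots,z_{N-n-j}, x_1',\dots,x_n')}\, \chi(w_1,\dots,w_j, z_1,\dots,z_{N-n-j}, x_1,\dots,x_n)$.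 -/

import Mathlib

open MeasureTheory

/-- The statistics factor `A_κ(z₁,…,z_N) = exp(iπκ ∑_{j<k} ε(z_j - z_k)/2)`. -/
noncomputable def Afac (κ : ℝ) {N : ℕ} (z : Fin N → ℝ) : ℂ :=
  Complex.exp (Complex.I * Real.pi * κ *
    (∑ j : Fin N, ∑ k ∈ Finset.univ.filter (fun k => j < k), Real.sign (z j - z k)) / 2)

/-- The statistics factor `B(z₁,…,z_N) = ∏_{j>k} ε(z_j - z_k)`. -/
noncomputable def Bfac {N : ℕ} (z : Fin N → ℝ) : ℝ :=
  ∏ j : Fin N, ∏ k ∈ Finset.univ.filter (fun k => k < j), Real.sign (z j - z k)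

/-! ### Auxiliary definitions and lemmas -/

noncomputable def Tsum {N : ℕ} (z : Fin N → ℝ) : ℝ :=
  ∑ j : Fin N, ∑ k ∈ Finset.univ.filter (fun k => j < k), Real.sign (z j - z k)

theorem Tsum_append {m n : ℕ} (z : Fin m → ℝ) (y : Fin n → ℝ) :
    Tsum (Fin.append z y) = Tsum z + Tsum y + ∑ i : Fin m, ∑ l : Fin n, Real.sign (z i - y l) := by
  unfold Tsum
  simp only [Finset.sum_filter]
  rw [Fin.sum_univ_add]
  simp only [Fin.sum_univ_add]
  simp only [Fin.append_left, Fin.append_right, Fin.lt_def, Fin.coe_castAdd, Fin.coe_natAdd]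
  have h1 : ∀ (i : Fin m) (l : Fin n), ((i:ℕ) < m + (l:ℕ)) = True := by
    intro i l; simp only [eq_iff_iff, iff_true]; omega
  have h2 : ∀ (l : Fin n) (i : Fin m), (m + (l:ℕ) < (i:ℕ)) = False := by
    intro l i; simp only [eq_iff_iff, iff_false, not_lt]; omega
  simp only [h1, h2, if_true, if_false, Finset.sum_const_zero, add_lt_add_iff_left,
    Finset.sum_add_distrib, zero_add, add_zero]
  ring

theorem Bfac_append {m n : ℕ} (z : Fin m → ℝ) (y : Fin n → ℝ) :
    Bfac (Fin.append z y) = Bfac z * Bfac y * ∏ l : Fin n, ∏ i : Fin m, Real.sign (y l - z i) := by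
  unfold Bfac
  simp only [Finset.prod_filter]
  rw [Fin.prod_univ_add]
  simp only [Fin.prod_univ_add]
  simp only [Fin.append_left, Fin.append_right, Fin.lt_def, Fin.coe_castAdd, Fin.coe_natAdd]
  have h1 : ∀ (i : Fin m) (l : Fin n), ((i:ℕ) < m + (l:ℕ)) = True := by
    intro i l; simp only [eq_iff_iff, iff_true]; omega
  have h2 : ∀ (l : Fin n) (i : Fin m), (m + (l:ℕ) < (i:ℕ)) = False := by
    intro l i; simp only [eq_iff_iff, iff_false, not_lt]; omega
  simp only [h1, h2, if_true, if_false, Finset.prod_const_one, add_lt_add_iff_left,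
    Finset.prod_mul_distrib, one_mul, mul_one]
  ring

theorem key_point {n : ℕ} (κ : ℝ) (x x' : Fin n → ℝ)
    (hxx' : ∀ j, x j < x' j) (hchain : ∀ j k : Fin n, j < k → x' j < x k)
    (t : ℝ) (ht : ∀ l, t ≠ x l ∧ t ≠ x' l) :
    Complex.exp (Complex.I * Real.pi * κ *
        ((∑ l : Fin n, (Real.sign (t - x l) - Real.sign (t - x' l)) : ℝ) : ℂ) / 2) *
      ((∏ l : Fin n, (Real.sign (t - x l) * Real.sign (t - x' l)) : ℝ) : ℂ)
    = 1 - (1 + Complex.exp (Complex.I * Real.pi * κ)) *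
        Set.indicator (⋃ l, Set.Icc (x l) (x' l)) 1 t := by
  by_cases hI : t ∈ ⋃ l, Set.Icc (x l) (x' l)
  · obtain ⟨l0, hl0⟩ : ∃ l, t ∈ Set.Icc (x l) (x' l) := by simpa using hI
    have h1 : x l0 < t := lt_of_le_of_ne hl0.1 (Ne.symm (ht l0).1)
    have h2 : t < x' l0 := lt_of_le_of_ne hl0.2 (ht l0).2
    have hother : ∀ l : Fin n, l ≠ l0 →
        Real.sign (t - x l) = Real.sign (t - x' l) ∧
        (Real.sign (t - x l) = 1 ∨ Real.sign (t - x l) = -1) := by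
      intro l hl
      rcases lt_or_gt_of_ne hl with h | h
      · have hp : 0 < t - x l := by
          have := hchain l l0 h; have := hxx' l; linarith
        have h' : 0 < t - x' l := by
          have := hchain l l0 h; linarith
        rw [Real.sign_of_pos hp, Real.sign_of_pos h']
        exact ⟨rfl, Or.inl rfl⟩
      · have hx : t - x l < 0 := by
          have := hchain l0 l h; linarith
        have h' : t - x' l < 0 := by
          have := hxx' l; have := hchain l0 l h; linarith
        rw [Real.sign_of_neg hx, Real.sign_of_neg h']
        exact ⟨rfl, Or.inr rfl⟩
    have hsum : (∑ l : Fin n, (Real.sign (t - x l) - Real.sign (t - x' l))) = 2 := by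
      rw [Finset.sum_eq_single l0]
      · rw [Real.sign_of_pos (by linarith : (0:ℝ) < t - x l0),
          Real.sign_of_neg (by linarith : t - x' l0 < (0:ℝ))]; norm_num
      · intro l _ hl; rw [(hother l hl).1]; ring
      · simp
    have hprod : (∏ l : Fin n, (Real.sign (t - x l) * Real.sign (t - x' l))) = -1 := by
      rw [Finset.prod_eq_single l0]
      · rw [Real.sign_of_pos (by linarith : (0:ℝ) < t - x l0),
          Real.sign_of_neg (by linarith : t - x' l0 < (0:ℝ))]; norm_num
      · intro l _ hl
        rw [← (hother l hl).1]
        rcases (hother l hl).2 with h | h <;> rw [h] <;> norm_num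
      · simp
    rw [hsum, hprod, Set.indicator_of_mem hI]
    push_cast
    rw [show Complex.I * Real.pi * κ * 2 / 2 = Complex.I * Real.pi * κ by ring]
    simp
  · have hout : ∀ l : Fin n, Real.sign (t - x l) = Real.sign (t - x' l) ∧
        (Real.sign (t - x l) = 1 ∨ Real.sign (t - x l) = -1) := by
      intro l
      have hni : t ∉ Set.Icc (x l) (x' l) := fun h => hI (Set.mem_iUnion.2 ⟨l, h⟩)
      rcases not_and_or.1 (fun h => hni ⟨h.1, h.2⟩ : ¬(x l ≤ t ∧ t ≤ x' l)) with h | h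
      · have hx : t - x l < 0 := by
          have := not_le.1 h; linarith
        have h' : t - x' l < 0 := by
          have := not_le.1 h; have := hxx' l; linarith
        rw [Real.sign_of_neg hx, Real.sign_of_neg h']
        exact ⟨rfl, Or.inr rfl⟩
      · have hp : 0 < t - x l := by
          have := not_le.1 h; have := hxx' l; linarith
        have h' : 0 < t - x' l := by
          have := not_le.1 h; linarith
        rw [Real.sign_of_pos hp, Real.sign_of_pos h']
        exact ⟨rfl, Or.inl rfl⟩
    have hsum : (∑ l : Fin n, (Real.sign (t - x l) - Real.sign (t - x' l))) = 0 := by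
      apply Finset.sum_eq_zero; intro l _; rw [(hout l).1]; ring
    have hprod : (∏ l : Fin n, (Real.sign (t - x l) * Real.sign (t - x' l))) = 1 := by
      apply Finset.prod_eq_one; intro l _
      rw [← (hout l).1]
      rcases (hout l).2 with h | h <;> rw [h] <;> norm_num
    rw [hsum, hprod, Set.indicator_of_notMem hI]
    simp

theorem Afac_def (κ : ℝ) {N : ℕ} (w : Fin N → ℝ) :
    Afac κ w = Complex.exp (Complex.I * Real.pi * κ * ((Tsum w : ℝ) : ℂ) / 2) := rfl

theorem conj_Afac (κ : ℝ) {N : ℕ} (w : Fin N → ℝ) :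
    (starRingEnd ℂ) (Afac κ w) = Afac (-κ) w := by
  rw [Afac_def, Afac_def, ← Complex.exp_conj]
  congr 1
  simp only [map_div₀, map_mul, map_ofNat, Complex.conj_I, Complex.conj_ofReal]
  push_cast
  ring

theorem sign_sq {c : ℝ} (h : c ≠ 0) : Real.sign c * Real.sign c = 1 := by
  rcases h.lt_or_gt with h | h
  · rw [Real.sign_of_neg h]; norm_num
  · rw [Real.sign_of_pos h]; norm_num

theorem Afac_combine {m n : ℕ} (κ : ℝ) (z : Fin m → ℝ) (y y' : Fin n → ℝ) :
    (starRingEnd ℂ) (Afac κ (Fin.append z y')) * Afac κ (Fin.append z y)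
    = (starRingEnd ℂ) (Afac κ y') * Afac κ y *
      ∏ i : Fin m, Complex.exp (Complex.I * Real.pi * κ *
        ((∑ l : Fin n, (Real.sign (z i - y l) - Real.sign (z i - y' l)) : ℝ) : ℂ) / 2) := by
  rw [conj_Afac, conj_Afac, Afac_def, Afac_def, Afac_def, Afac_def]
  rw [← Complex.exp_sum, ← Complex.exp_add, ← Complex.exp_add, ← Complex.exp_add]
  congr 1
  have hs : (∑ i : Fin m, Complex.I * Real.pi * κ *
        ((∑ l : Fin n, (Real.sign (z i - y l) - Real.sign (z i - y' l)) : ℝ) : ℂ) / 2)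
      = Complex.I * Real.pi * κ *
        ((∑ i : Fin m, ∑ l : Fin n, (Real.sign (z i - y l) - Real.sign (z i - y' l)) : ℝ) : ℂ) / 2 := by
    rw [Complex.ofReal_sum, Finset.mul_sum, Finset.sum_div]
  have hsub : (∑ i : Fin m, ∑ l : Fin n, (Real.sign (z i - y l) - Real.sign (z i - y' l)))
      = (∑ i : Fin m, ∑ l : Fin n, Real.sign (z i - y l))
        - (∑ i : Fin m, ∑ l : Fin n, Real.sign (z i - y' l)) := by
    simp [Finset.sum_sub_distrib]
  rw [hs, hsub, Tsum_append, Tsum_append]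
  push_cast
  ring

theorem Bfac_combine {m n : ℕ} (z : Fin m → ℝ) (hz : Function.Injective z) (y y' : Fin n → ℝ) :
    Bfac (Fin.append z y') * Bfac (Fin.append z y)
    = Bfac y' * Bfac y *
      ∏ i : Fin m, ∏ l : Fin n, (Real.sign (z i - y l) * Real.sign (z i - y' l)) := by
  rw [Bfac_append, Bfac_append]
  have hBz : Bfac z * Bfac z = 1 := by
    unfold Bfac
    rw [← Finset.prod_mul_distrib]
    apply Finset.prod_eq_one; intro j _
    rw [← Finset.prod_mul_distrib]
    apply Finset.prod_eq_one; intro k hk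
    have hkj : k < j := (Finset.mem_filter.1 hk).2
    exact sign_sq (sub_ne_zero.2 fun h => absurd (hz h) (ne_of_gt hkj))
  have hcross : (∏ l : Fin n, ∏ i : Fin m, Real.sign (y' l - z i)) *
      (∏ l : Fin n, ∏ i : Fin m, Real.sign (y l - z i))
      = ∏ i : Fin m, ∏ l : Fin n, (Real.sign (z i - y l) * Real.sign (z i - y' l)) := by
    rw [← Finset.prod_mul_distrib]
    have h : ∀ l ∈ (Finset.univ : Finset (Fin n)),
        (∏ i : Fin m, Real.sign (y' l - z i)) * ∏ i : Fin m, Real.sign (y l - z i)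
        = ∏ i : Fin m, (Real.sign (z i - y l) * Real.sign (z i - y' l)) := by
      intro l _
      rw [← Finset.prod_mul_distrib]
      apply Finset.prod_congr rfl; intro i _
      rw [← neg_sub (z i) (y' l), ← neg_sub (z i) (y l), Real.sign_neg, Real.sign_neg]
      ring
    rw [Finset.prod_congr rfl h, Finset.prod_comm]
  calc (Bfac z * Bfac y' * ∏ l : Fin n, ∏ i : Fin m, Real.sign (y' l - z i)) *
        (Bfac z * Bfac y * ∏ l : Fin n, ∏ i : Fin m, Real.sign (y l - z i))
      = (Bfac z * Bfac z) * (Bfac y' * Bfac y) *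
        ((∏ l : Fin n, ∏ i : Fin m, Real.sign (y' l - z i)) *
         (∏ l : Fin n, ∏ i : Fin m, Real.sign (y l - z i))) := by ring
    _ = _ := by rw [hBz, hcross, one_mul]

def extPerm {m n : ℕ} (σ : Equiv.Perm (Fin m)) : Equiv.Perm (Fin (m + n)) :=
  (finSumFinEquiv.symm.trans ((σ.sumCongr (Equiv.refl (Fin n))).trans finSumFinEquiv))

theorem append_comp_extPerm {m n : ℕ} (z : Fin m → ℝ) (y : Fin n → ℝ) (σ : Equiv.Perm (Fin m)) :
    Fin.append z y ∘ (extPerm (n := n) σ) = Fin.append (z ∘ σ) y := by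
  funext k
  rcases h : finSumFinEquiv.symm k with i | l
  · have hk : k = Fin.castAdd n i := by
      have := congrArg finSumFinEquiv h
      simpa using this
    subst hk
    simp [extPerm, Function.comp, h, Fin.append_left]
  · have hk : k = Fin.natAdd m l := by
      have := congrArg finSumFinEquiv h
      simpa using this
    subst hk
    simp [extPerm, Function.comp, h, Fin.append_right]

theorem chi_vanish {m n : ℕ} (χ : (Fin (m + n) → ℝ) → ℂ)
    (hanti : ∀ (π : Equiv.Perm (Fin (m + n))) (z : Fin (m + n) → ℝ),
      χ (z ∘ π) = ((Equiv.Perm.sign π : ℤ) : ℂ) * χ z)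
    (z : Fin m → ℝ) (y : Fin n → ℝ) (i j : Fin m) (hij : i ≠ j) (hzz : z i = z j) :
    χ (Fin.append z y) = 0 := by
  have hne : (Fin.castAdd n i) ≠ (Fin.castAdd n j) := by
    intro h; exact hij (Fin.ext (by simpa using congrArg Fin.val h))
  set σ : Equiv.Perm (Fin (m + n)) := Equiv.swap (Fin.castAdd n i) (Fin.castAdd n j) with hσ
  have hfix : (Fin.append z y) ∘ σ = Fin.append z y := by
    funext k
    by_cases h1 : k = Fin.castAdd n i
    · subst h1
      simp [hσ, Function.comp, Equiv.swap_apply_left, Fin.append_left, hzz]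
    · by_cases h2 : k = Fin.castAdd n j
      · subst h2
        simp [hσ, Function.comp, Equiv.swap_apply_right, Fin.append_left, hzz]
      · simp [hσ, Function.comp, Equiv.swap_apply_of_ne_of_ne h1 h2]
  have h := hanti σ (Fin.append z y)
  rw [hfix, Equiv.Perm.sign_swap hne] at h
  push_cast at h
  linear_combination h / 2

theorem integrand_eq {m n : ℕ} (κ : ℝ) (χ : (Fin (m + n) → ℝ) → ℂ)
    (hanti : ∀ (π : Equiv.Perm (Fin (m + n))) (z : Fin (m + n) → ℝ),
      χ (z ∘ π) = ((Equiv.Perm.sign π : ℤ) : ℂ) * χ z)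
    (x x' : Fin n → ℝ)
    (hxx' : ∀ j, x j < x' j) (hchain : ∀ j k : Fin n, j < k → x' j < x k)
    (z : Fin m → ℝ) (hz : ∀ i l, z i ≠ x l ∧ z i ≠ x' l) :
    (starRingEnd ℂ) (Afac κ (Fin.append z x') * (Bfac (Fin.append z x') : ℂ) *
        χ (Fin.append z x')) *
      (Afac κ (Fin.append z x) * (Bfac (Fin.append z x) : ℂ) * χ (Fin.append z x))
    = (Afac (-κ) x' * (Bfac x' : ℂ) * (Afac κ x * (Bfac x : ℂ))) *
        (∏ i : Fin m, (1 - (1 + Complex.exp (Complex.I * Real.pi * κ)) *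
          Set.indicator (⋃ l, Set.Icc (x l) (x' l)) 1 (z i))) *
        ((starRingEnd ℂ) (χ (Fin.append z x')) * χ (Fin.append z x)) := by
  by_cases hinj : Function.Injective z
  · have hA := Afac_combine κ z x x'
    have hB := Bfac_combine z hinj x x'
    have hprod : (∏ i : Fin m, Complex.exp (Complex.I * Real.pi * κ *
          ((∑ l : Fin n, (Real.sign (z i - x l) - Real.sign (z i - x' l)) : ℝ) : ℂ) / 2)) *
        (∏ i : Fin m, ((∏ l : Fin n, (Real.sign (z i - x l) * Real.sign (z i - x' l)) : ℝ) : ℂ))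
        = ∏ i : Fin m, (1 - (1 + Complex.exp (Complex.I * Real.pi * κ)) *
            Set.indicator (⋃ l, Set.Icc (x l) (x' l)) 1 (z i)) := by
      rw [← Finset.prod_mul_distrib]
      exact Finset.prod_congr rfl fun i _ =>
        key_point κ x x' hxx' hchain (z i) (hz i)
    calc (starRingEnd ℂ) (Afac κ (Fin.append z x') * (Bfac (Fin.append z x') : ℂ) *
            χ (Fin.append z x')) *
          (Afac κ (Fin.append z x) * (Bfac (Fin.append z x) : ℂ) * χ (Fin.append z x))
        = ((starRingEnd ℂ) (Afac κ (Fin.append z x')) * Afac κ (Fin.append z x)) *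
            ((Bfac (Fin.append z x') * Bfac (Fin.append z x) : ℝ) : ℂ) *
            ((starRingEnd ℂ) (χ (Fin.append z x')) * χ (Fin.append z x)) := by
          rw [map_mul, map_mul, Complex.conj_ofReal]; push_cast; ring
      _ = ((starRingEnd ℂ) (Afac κ x') * Afac κ x *
            ∏ i : Fin m, Complex.exp (Complex.I * Real.pi * κ *
              ((∑ l : Fin n, (Real.sign (z i - x l) - Real.sign (z i - x' l)) : ℝ) : ℂ) / 2)) *
            ((Bfac x' * Bfac x *
              ∏ i : Fin m, ∏ l : Fin n, (Real.sign (z i - x l) * Real.sign (z i - x' l)) : ℝ) : ℂ) *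
            ((starRingEnd ℂ) (χ (Fin.append z x')) * χ (Fin.append z x)) := by
          rw [hA, hB]
      _ = _ := by
          rw [conj_Afac, Complex.ofReal_mul, Complex.ofReal_mul, Complex.ofReal_prod,
            ← hprod]
          ring
  · simp only [Function.Injective, not_forall] at hinj
    obtain ⟨i, j, hzz, hij⟩ := hinj
    rw [chi_vanish χ hanti z x i j hij hzz, chi_vanish χ hanti z x' i j hij hzz]
    simp

theorem g_perm {m n : ℕ} (χ : (Fin (m + n) → ℝ) → ℂ)
    (hanti : ∀ (π : Equiv.Perm (Fin (m + n))) (z : Fin (m + n) → ℝ),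
      χ (z ∘ π) = ((Equiv.Perm.sign π : ℤ) : ℂ) * χ z)
    (x x' : Fin n → ℝ) (σ : Equiv.Perm (Fin m)) (z : Fin m → ℝ) :
    (starRingEnd ℂ) (χ (Fin.append (z ∘ σ) x')) * χ (Fin.append (z ∘ σ) x)
    = (starRingEnd ℂ) (χ (Fin.append z x')) * χ (Fin.append z x) := by
  rw [← append_comp_extPerm z x' σ, ← append_comp_extPerm z x σ,
    hanti (extPerm σ) (Fin.append z x'), hanti (extPerm σ) (Fin.append z x),
    map_mul, map_intCast]
  have hs : (((Equiv.Perm.sign (extPerm (n := n) σ) : ℤ) : ℂ)) *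
      ((Equiv.Perm.sign (extPerm (n := n) σ) : ℤ) : ℂ) = 1 := by
    have h := Int.units_mul_self (Equiv.Perm.sign (extPerm (n := n) σ))
    have h2 := congrArg (fun u : ℤˣ => ((u : ℤ) : ℂ)) h
    push_cast at h2
    simpa using h2
  linear_combination ((starRingEnd ℂ) (χ (Fin.append z x')) * χ (Fin.append z x)) * hs

theorem card_filter_lt (m j : ℕ) (hj : j ≤ m) :
    (Finset.univ.filter (fun k : Fin m => (k : ℕ) < j)).card = j := by
  apply Finset.card_eq_of_equiv_fin
  exact {
    toFun := fun k => ⟨(k : Fin m), (Finset.mem_filter.1 k.2).2⟩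
    invFun := fun a => ⟨⟨(a : ℕ), lt_of_lt_of_le a.2 hj⟩, by simp [Finset.mem_filter]⟩
    left_inv := fun k => by ext; simp
    right_inv := fun a => by ext; simp }

theorem exists_perm_card (m j : ℕ) (S : Finset (Fin m)) (hS : S.card = j) :
    ∃ σ : Equiv.Perm (Fin m), ∀ i : Fin m, (i ∈ S ↔ ((σ i : Fin m) : ℕ) < j) := by
  classical
  have hj : j ≤ m := by
    rw [← hS]; simpa using Finset.card_le_card (Finset.subset_univ S)
  set S₀ : Finset (Fin m) := Finset.univ.filter (fun k : Fin m => (k : ℕ) < j) with hS₀def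
  have hS₀ : S₀.card = j := card_filter_lt m j hj
  have e1 : {i : Fin m // i ∈ S} ≃ {i : Fin m // i ∈ S₀} := Finset.equivOfCardEq (hS.trans hS₀.symm)
  have e2 : {i : Fin m // ¬ i ∈ S} ≃ {i : Fin m // ¬ i ∈ S₀} := by
    refine (Equiv.subtypeEquivRight (fun i => ?_)).trans
      ((Finset.equivOfCardEq (s := Sᶜ) (t := S₀ᶜ) ?_).trans (Equiv.subtypeEquivRight (fun i => ?_)))
    · simp
    · rw [Finset.card_compl, Finset.card_compl, hS, hS₀]
    · simp
  refine ⟨(Equiv.sumCompl (· ∈ S)).symm.trans ((Equiv.sumCongr e1 e2).trans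
    (Equiv.sumCompl (· ∈ S₀))), fun i => ?_⟩
  by_cases hi : i ∈ S
  · simp only [Equiv.trans_apply, Equiv.sumCompl_symm_apply_of_pos hi,
      Equiv.sumCongr_apply, Sum.map_inl, Equiv.sumCompl_apply_inl]
    exact iff_of_true hi (Finset.mem_filter.1 (e1 ⟨i, hi⟩).2).2
  · simp only [Equiv.trans_apply, Equiv.sumCompl_symm_apply_of_neg hi,
      Equiv.sumCongr_apply, Sum.map_inr, Equiv.sumCompl_apply_inr]
    exact iff_of_false hi (fun hlt => (e2 ⟨i, hi⟩).2
      (Finset.mem_filter.2 ⟨Finset.mem_univ _, hlt⟩))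

theorem integral_pi_perm {m n : ℕ} (χ : (Fin (m + n) → ℝ) → ℂ)
    (hanti : ∀ (π : Equiv.Perm (Fin (m + n))) (z : Fin (m + n) → ℝ),
      χ (z ∘ π) = ((Equiv.Perm.sign π : ℤ) : ℂ) * χ z)
    (x x' : Fin n → ℝ) (Iu V : Set ℝ)
    (S : Finset (Fin m)) (j : ℕ) (hS : S.card = j) :
    (∫ z in Set.univ.pi (fun i : Fin m => if i ∈ S then Iu else V),
      (starRingEnd ℂ) (χ (Fin.append z x')) * χ (Fin.append z x))
    = ∫ z in Set.univ.pi (fun i : Fin m => if (i : ℕ) < j then Iu else V),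
      (starRingEnd ℂ) (χ (Fin.append z x')) * χ (Fin.append z x) := by
  classical
  obtain ⟨σ, hσ⟩ := exists_perm_card m j S hS
  have hΦmp : MeasurePreserving
      (MeasurableEquiv.arrowCongr' (σ : Fin m ≃ Fin m) (MeasurableEquiv.refl ℝ))
      volume volume :=
    volume_preserving_arrowCongr' _ _ (MeasurePreserving.id _)
  set Φ := MeasurableEquiv.arrowCongr' (σ : Fin m ≃ Fin m) (MeasurableEquiv.refl ℝ) with hΦ
  have hΦapp : ∀ z : Fin m → ℝ, Φ z = z ∘ σ.symm := fun z => rfl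
  have hpre : Φ ⁻¹' (Set.univ.pi (fun i : Fin m => if (i : ℕ) < j then Iu else V))
      = Set.univ.pi (fun i : Fin m => if i ∈ S then Iu else V) := by
    ext z
    simp only [Set.mem_preimage, hΦapp, Set.mem_pi, Set.mem_univ, true_implies, Function.comp]
    constructor
    · intro h i
      have h2 := h (σ i)
      rw [Equiv.symm_apply_apply] at h2
      by_cases hi : i ∈ S
      · rw [if_pos hi]; rw [if_pos ((hσ i).1 hi)] at h2; exact h2
      · rw [if_neg hi]; rw [if_neg (fun hlt => hi ((hσ i).2 hlt))] at h2; exact h2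
    · intro h k
      have h2 := h (σ.symm k)
      have hk : σ.symm k ∈ S ↔ (k : ℕ) < j := by
        rw [hσ (σ.symm k), Equiv.apply_symm_apply]
      by_cases hlt : (k : ℕ) < j
      · rw [if_pos hlt]; rw [if_pos (hk.2 hlt)] at h2; exact h2
      · rw [if_neg hlt]; rw [if_neg (fun hS' => hlt (hk.1 hS'))] at h2; exact h2
  have hmain := hΦmp.setIntegral_preimage_emb (MeasurableEquiv.measurableEmbedding Φ)
      (fun z => (starRingEnd ℂ) (χ (Fin.append z x')) * χ (Fin.append z x))
      (Set.univ.pi (fun i : Fin m => if (i : ℕ) < j then Iu else V))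
  rw [hpre] at hmain
  rw [← hmain]
  have hfun : (fun z : Fin m → ℝ =>
      (starRingEnd ℂ) (χ (Fin.append (Φ z) x')) * χ (Fin.append (Φ z) x))
      = fun z => (starRingEnd ℂ) (χ (Fin.append z x')) * χ (Fin.append z x) := by
    funext z
    rw [hΦapp]
    exact g_perm χ hanti x x' σ.symm z
  rw [hfun]

/-- Anyon–Fermi expansion of the `n`-particle reduced density matrix, ordering `O₊`
(`x₁ < x₁' < ⋯ < xₙ < xₙ'`, `I₊ = ⋃ₗ [xₗ, xₗ']`), with `N = m + n` particles on
`V = [-L/2, L/2]` and `χᵃ = A_κ B χ` for a continuous totally antisymmetric `χ`. -/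
theorem anyon_fermi_rdm_plus (κ L : ℝ) (hL : 0 < L) (m n : ℕ) (hn : 1 ≤ n)
    (χ : (Fin (m + n) → ℝ) → ℂ) (hcont : Continuous χ)
    (hanti : ∀ (π : Equiv.Perm (Fin (m + n))) (z : Fin (m + n) → ℝ),
      χ (z ∘ π) = ((Equiv.Perm.sign π : ℤ) : ℂ) * χ z)
    (x x' : Fin n → ℝ)
    (hxV : ∀ j, x j ∈ Set.Icc (-(L / 2)) (L / 2))
    (hx'V : ∀ j, x' j ∈ Set.Icc (-(L / 2)) (L / 2))
    (hxx' : ∀ j, x j < x' j) (hchain : ∀ j k : Fin n, j < k → x' j < x k) :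
    (∫ z in Set.univ.pi (fun _ : Fin m => Set.Icc (-(L / 2)) (L / 2)),
        (starRingEnd ℂ) (Afac κ (Fin.append z x') * (Bfac (Fin.append z x') : ℂ) *
            χ (Fin.append z x')) *
          (Afac κ (Fin.append z x) * (Bfac (Fin.append z x) : ℂ) * χ (Fin.append z x)))
      = (Afac (-κ) x' * (Bfac x' : ℂ) * (Afac κ x * (Bfac x : ℂ))) *
          ∑ j ∈ Finset.range (m + 1),
            (-1) ^ j * (1 + Complex.exp (Complex.I * Real.pi * κ)) ^ j * (m.choose j : ℂ) *
              ∫ z in Set.univ.pi (fun i : Fin m =>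
                  if (i : ℕ) < j then ⋃ l, Set.Icc (x l) (x' l)
                  else Set.Icc (-(L / 2)) (L / 2)),
                (starRingEnd ℂ) (χ (Fin.append z x')) * χ (Fin.append z x) := by
  classical
  have hIV : (⋃ l, Set.Icc (x l) (x' l)) ⊆ Set.Icc (-(L / 2)) (L / 2) :=
    Set.iUnion_subset fun l => Set.Icc_subset_Icc (hxV l).1 (hx'V l).2
  have hIuMeas : MeasurableSet (⋃ l, Set.Icc (x l) (x' l)) :=
    MeasurableSet.iUnion fun l => measurableSet_Icc
  have hVmMeas : MeasurableSet (Set.univ.pi fun _ : Fin m => Set.Icc (-(L / 2)) (L / 2)) :=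
    MeasurableSet.univ_pi fun _ => measurableSet_Icc
  have happ : ∀ y : Fin n → ℝ, Continuous fun z : Fin m → ℝ => Fin.append z y := by
    intro y
    apply continuous_pi; intro k
    rcases h : finSumFinEquiv.symm k with i | l
    · have hk : k = Fin.castAdd n i := by
        have := congrArg finSumFinEquiv h; simpa using this
      subst hk
      simp only [Fin.append_left]
      exact continuous_apply i
    · have hk : k = Fin.natAdd m l := by
        have := congrArg finSumFinEquiv h; simpa using this
      subst hk
      simp only [Fin.append_right]
      exact continuous_const
  have hgcont : Continuous fun z : Fin m → ℝ =>
      (starRingEnd ℂ) (χ (Fin.append z x')) * χ (Fin.append z x) :=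
    (Complex.continuous_conj.comp (hcont.comp (happ x'))).mul (hcont.comp (happ x))
  have hgint : IntegrableOn
      (fun z : Fin m → ℝ => (starRingEnd ℂ) (χ (Fin.append z x')) * χ (Fin.append z x))
      (Set.univ.pi fun _ : Fin m => Set.Icc (-(L / 2)) (L / 2)) volume :=
    hgcont.continuousOn.integrableOn_compact (isCompact_univ_pi fun _ => isCompact_Icc)
  have hae : ∀ᵐ z : Fin m → ℝ, ∀ i : Fin m, ∀ l : Fin n, z i ≠ x l ∧ z i ≠ x' l := by
    rw [MeasureTheory.ae_all_iff]; intro i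
    rw [MeasureTheory.ae_all_iff]; intro l
    have hx1 : ∀ᵐ z : Fin m → ℝ, z i ≠ x l := by
      have := MeasureTheory.Measure.ae_eval_ne (fun _ : Fin m => (volume : Measure ℝ)) i (x l)
      rwa [← MeasureTheory.volume_pi] at this
    have hx2 : ∀ᵐ z : Fin m → ℝ, z i ≠ x' l := by
      have := MeasureTheory.Measure.ae_eval_ne (fun _ : Fin m => (volume : Measure ℝ)) i (x' l)
      rwa [← MeasureTheory.volume_pi] at this
    exact hx1.and hx2
  have stepA : (∫ z in Set.univ.pi (fun _ : Fin m => Set.Icc (-(L / 2)) (L / 2)),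
        (starRingEnd ℂ) (Afac κ (Fin.append z x') * (Bfac (Fin.append z x') : ℂ) *
            χ (Fin.append z x')) *
          (Afac κ (Fin.append z x) * (Bfac (Fin.append z x) : ℂ) * χ (Fin.append z x)))
      = ∫ z in Set.univ.pi (fun _ : Fin m => Set.Icc (-(L / 2)) (L / 2)),
          (Afac (-κ) x' * (Bfac x' : ℂ) * (Afac κ x * (Bfac x : ℂ))) *
          ((∏ i : Fin m, (1 - (1 + Complex.exp (Complex.I * Real.pi * κ)) *
              Set.indicator (⋃ l, Set.Icc (x l) (x' l)) 1 (z i))) *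
            ((starRingEnd ℂ) (χ (Fin.append z x')) * χ (Fin.append z x))) := by
    apply setIntegral_congr_ae hVmMeas
    filter_upwards [hae] with z hz _
    rw [integrand_eq κ χ hanti x x' hxx' hchain z hz, mul_assoc]
  rw [stepA, MeasureTheory.integral_const_mul]
  congr 1
  have hind : ∀ (S : Finset (Fin m)) (z : Fin m → ℝ),
      (∏ i ∈ S, Set.indicator (⋃ l, Set.Icc (x l) (x' l)) (1 : ℝ → ℂ) (z i)) *
        ((starRingEnd ℂ) (χ (Fin.append z x')) * χ (Fin.append z x))
      = Set.indicator ((S : Set (Fin m)).pi fun _ => ⋃ l, Set.Icc (x l) (x' l))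
          (fun w => (starRingEnd ℂ) (χ (Fin.append w x')) * χ (Fin.append w x)) z := by
    intro S z
    by_cases hzS : z ∈ (S : Set (Fin m)).pi fun _ => ⋃ l, Set.Icc (x l) (x' l)
    · rw [Set.indicator_of_mem hzS]
      have h1 : ∀ i ∈ S, Set.indicator (⋃ l, Set.Icc (x l) (x' l)) (1 : ℝ → ℂ) (z i) = 1 := by
        intro i hi
        rw [Set.indicator_of_mem (hzS i (Finset.mem_coe.2 hi))]; rfl
      rw [Finset.prod_congr rfl h1, Finset.prod_const_one, one_mul]
    · rw [Set.indicator_of_notMem hzS]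
      simp only [Set.mem_pi, Finset.mem_coe] at hzS
      push_neg at hzS
      obtain ⟨i, hiS, hi⟩ := hzS
      rw [Finset.prod_eq_zero hiS (Set.indicator_of_notMem hi 1), zero_mul]
  have hPz : ∀ z : Fin m → ℝ,
      (∏ i : Fin m, (1 - (1 + Complex.exp (Complex.I * Real.pi * κ)) *
          Set.indicator (⋃ l, Set.Icc (x l) (x' l)) 1 (z i))) *
        ((starRingEnd ℂ) (χ (Fin.append z x')) * χ (Fin.append z x))
      = ∑ S ∈ (Finset.univ : Finset (Fin m)).powerset,
          (-(1 + Complex.exp (Complex.I * Real.pi * κ))) ^ S.card *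
            Set.indicator ((S : Set (Fin m)).pi fun _ => ⋃ l, Set.Icc (x l) (x' l))
              (fun w => (starRingEnd ℂ) (χ (Fin.append w x')) * χ (Fin.append w x)) z := by
    intro z
    have h := Finset.prod_add
      (fun i : Fin m => (-(1 + Complex.exp (Complex.I * Real.pi * κ))) *
        Set.indicator (⋃ l, Set.Icc (x l) (x' l)) (1 : ℝ → ℂ) (z i))
      (fun _ : Fin m => (1 : ℂ)) Finset.univ
    simp only [Finset.prod_const_one, mul_one] at h
    have h0 : (∏ i : Fin m, (1 - (1 + Complex.exp (Complex.I * Real.pi * κ)) *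
          Set.indicator (⋃ l, Set.Icc (x l) (x' l)) 1 (z i)))
        = ∑ S ∈ (Finset.univ : Finset (Fin m)).powerset,
            ∏ i ∈ S, ((-(1 + Complex.exp (Complex.I * Real.pi * κ))) *
              Set.indicator (⋃ l, Set.Icc (x l) (x' l)) (1 : ℝ → ℂ) (z i)) := by
      rw [← h]; apply Finset.prod_congr rfl; intro i _; ring
    rw [h0, Finset.sum_mul]
    apply Finset.sum_congr rfl; intro S _
    rw [Finset.prod_mul_distrib, Finset.prod_const, mul_assoc, hind S z]
  calc (∫ z in Set.univ.pi (fun _ : Fin m => Set.Icc (-(L / 2)) (L / 2)),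
        (∏ i : Fin m, (1 - (1 + Complex.exp (Complex.I * Real.pi * κ)) *
            Set.indicator (⋃ l, Set.Icc (x l) (x' l)) 1 (z i))) *
          ((starRingEnd ℂ) (χ (Fin.append z x')) * χ (Fin.append z x)))
      = ∫ z in Set.univ.pi (fun _ : Fin m => Set.Icc (-(L / 2)) (L / 2)),
          ∑ S ∈ (Finset.univ : Finset (Fin m)).powerset,
            (-(1 + Complex.exp (Complex.I * Real.pi * κ))) ^ S.card *
              Set.indicator ((S : Set (Fin m)).pi fun _ => ⋃ l, Set.Icc (x l) (x' l))
                (fun w => (starRingEnd ℂ) (χ (Fin.append w x')) * χ (Fin.append w x)) z := by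
        simp only [hPz]
    _ = ∑ S ∈ (Finset.univ : Finset (Fin m)).powerset,
          ∫ z in Set.univ.pi (fun _ : Fin m => Set.Icc (-(L / 2)) (L / 2)),
            (-(1 + Complex.exp (Complex.I * Real.pi * κ))) ^ S.card *
              Set.indicator ((S : Set (Fin m)).pi fun _ => ⋃ l, Set.Icc (x l) (x' l))
                (fun w => (starRingEnd ℂ) (χ (Fin.append w x')) * χ (Fin.append w x)) z := by
        apply MeasureTheory.integral_finset_sum
        intro S _
        exact ((hgint.indicator
          (MeasurableSet.pi S.countable_toSet fun _ _ => hIuMeas)).const_mul _)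
    _ = ∑ S ∈ (Finset.univ : Finset (Fin m)).powerset,
          (fun j => (-(1 + Complex.exp (Complex.I * Real.pi * κ))) ^ j *
            ∫ z in Set.univ.pi (fun i : Fin m =>
                if (i : ℕ) < j then ⋃ l, Set.Icc (x l) (x' l)
                else Set.Icc (-(L / 2)) (L / 2)),
              (starRingEnd ℂ) (χ (Fin.append z x')) * χ (Fin.append z x)) S.card := by
        apply Finset.sum_congr rfl
        intro S _
        rw [MeasureTheory.integral_const_mul]
        congr 1
        rw [setIntegral_indicator (MeasurableSet.pi S.countable_toSet fun _ _ => hIuMeas)]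
        have hseteq : (Set.univ.pi fun _ : Fin m => Set.Icc (-(L / 2)) (L / 2)) ∩
            ((S : Set (Fin m)).pi fun _ => ⋃ l, Set.Icc (x l) (x' l))
            = Set.univ.pi (fun i : Fin m =>
                if i ∈ S then ⋃ l, Set.Icc (x l) (x' l) else Set.Icc (-(L / 2)) (L / 2)) := by
          ext z
          simp only [Set.mem_inter_iff, Set.mem_pi, Set.mem_univ, true_implies, Finset.mem_coe]
          constructor
          · rintro ⟨h1, h2⟩ i
            by_cases hi : i ∈ S
            · rw [if_pos hi]; exact h2 i hi
            · rw [if_neg hi]; exact h1 i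
          · intro h
            constructor
            · intro i
              by_cases hi : i ∈ S
              · have := h i; rw [if_pos hi] at this; exact hIV this
              · have := h i; rwa [if_neg hi] at this
            · intro i hi
              have := h i; rwa [if_pos hi] at this
        rw [hseteq]
        exact integral_pi_perm χ hanti x x'
          (⋃ l, Set.Icc (x l) (x' l)) (Set.Icc (-(L / 2)) (L / 2)) S S.card rfl
    _ = ∑ j ∈ Finset.range ((Finset.univ : Finset (Fin m)).card + 1),
          (Finset.univ : Finset (Fin m)).card.choose j •
            ((fun j => (-(1 + Complex.exp (Complex.I * Real.pi * κ))) ^ j *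
              ∫ z in Set.univ.pi (fun i : Fin m =>
                  if (i : ℕ) < j then ⋃ l, Set.Icc (x l) (x' l)
                  else Set.Icc (-(L / 2)) (L / 2)),
                (starRingEnd ℂ) (χ (Fin.append z x')) * χ (Fin.append z x)) j) :=
        Finset.sum_powerset_apply_card
          (fun j => (-(1 + Complex.exp (Complex.I * Real.pi * κ))) ^ j *
            ∫ z in Set.univ.pi (fun i : Fin m =>
                if (i : ℕ) < j then ⋃ l, Set.Icc (x l) (x' l)
                else Set.Icc (-(L / 2)) (L / 2)),
              (starRingEnd ℂ) (χ (Fin.append z x')) * χ (Fin.append z x))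
    _ = _ := by
        simp only [Finset.card_univ, Fintype.card_fin]
        apply Finset.sum_congr rfl
        intro j _
        rw [nsmul_eq_mul, neg_pow]
        ring
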